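/- For every k ≥ 1, the k-th power of the Jacobson radical of the convolution algebra A_n equals the linear span of {e_t : t ∈ PT_n, |dom t| − |im t| ≥ k}. -/

import Mathlib

/-- The monoid of partial functions on `{1,…,n}`, modeled as `Fin n → Option (Fin n)`,
under composition of partial functions (right to left). -/
abbrev PT (n : ℕ) := Fin n → Option (Fin n)

namespace PT

variable {n : ℕ}

/-- Composition of partial functions, right to left: `comp s t = s ∘ t`. -/
def comp (s t : PT n) : PT n := fun x => (t x).bind s

/-- The domain of a partial function. -/
def dom (t : PT n) : Finset (Fin n) := Finset.univ.filter fun x => (t x).isSome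

/-- The image (range) of a partial function. -/
def ran (t : PT n) : Finset (Fin n) := Finset.univ.filter fun y => ∃ x, t x = some y

/-- The identity partial function on the subset `X`. -/
def idOn (X : Finset (Fin n)) : PT n := fun x => if x ∈ X then some x else none

instance : Monoid (PT n) where
  mul := comp
  one := fun x => some x
  mul_assoc s t w := by
    funext x
    show (w x).bind (fun z => (t z).bind s) = ((w x).bind t).bind s
    exact (Option.bind_assoc (w x) t s).symm
  one_mul t := by
    funext x
    show (t x).bind (fun y => some y) = t x
    cases t x <;> rfl
  mul_one t := by
    funext x
    show (some x).bind t = t x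
    rfl

end PT

namespace PT

variable {n : ℕ}

lemma mem_dom {t : PT n} {x : Fin n} : x ∈ dom t ↔ (t x).isSome := by simp [dom]

lemma mem_ran {t : PT n} {y : Fin n} : y ∈ ran t ↔ ∃ x, t x = some y := by simp [ran]

lemma comp_assoc (s t w : PT n) : comp (comp s t) w = comp s (comp t w) := mul_assoc s t w

lemma dom_comp {s t : PT n} (h : dom s = ran t) : dom (comp s t) = dom t := by
  ext x
  rw [mem_dom, mem_dom]
  show ((t x).bind s).isSome ↔ _
  cases ht : t x with
  | none => simp
  | some a =>
    have ha : a ∈ dom s := by rw [h, mem_ran]; exact ⟨x, ht⟩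
    rw [mem_dom] at ha
    simpa using ha
  

lemma ran_comp {t w : PT n} (h : dom t = ran w) : ran (comp t w) = ran t := by
  ext y
  rw [mem_ran, mem_ran]
  constructor
  · rintro ⟨x, hx⟩
    rcases Option.bind_eq_some_iff.mp hx with ⟨a, _, hta⟩
    exact ⟨a, hta⟩
  · rintro ⟨a, hta⟩
    have ha : a ∈ ran w := by
      rw [← h, mem_dom]
      simp [hta]
    rcases mem_ran.mp ha with ⟨x, hx⟩
    exact ⟨x, by show (w x).bind t = some y; rw [hx]; exact hta⟩

lemma dom_idOn (X : Finset (Fin n)) : dom (idOn X) = X := by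
  ext x
  rw [mem_dom, idOn]
  by_cases h : x ∈ X <;> simp [h]

lemma ran_idOn (X : Finset (Fin n)) : ran (idOn X) = X := by
  ext y
  rw [mem_ran]
  constructor
  · rintro ⟨x, hx⟩
    unfold idOn at hx
    split at hx
    · cases Option.some_injective _ hx; assumption
    · exact absurd hx (by simp)
  · intro hy
    exact ⟨y, by unfold idOn; rw [if_pos hy]⟩

lemma comp_idOn {s : PT n} : comp s (idOn (dom s)) = s := by
  funext x
  show ((idOn (dom s)) x).bind s = s x
  unfold idOn
  by_cases h : x ∈ dom s
  · rw [if_pos h]; rfl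
  · rw [if_neg h]
    rw [mem_dom] at h
    cases hs : s x with
    | none => rfl
    | some a => rw [hs] at h; simp at h

lemma idOn_comp {t : PT n} : comp (idOn (ran t)) t = t := by
  funext x
  show (t x).bind (idOn (ran t)) = t x
  cases ht : t x with
  | none => rfl
  | some a =>
    show idOn (ran t) a = some a
    unfold idOn
    rw [if_pos (mem_ran.mpr ⟨x, ht⟩)]

end PT

/-- The convolution algebra `A_n` of the epimorphism category: the vector space with basis
`{e_t : t ∈ PT_n}` and multiplication `e_s · e_t = e_{s ∘ t}` if `dom s = im t`, else `0`. -/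
noncomputable def PTAlg (n : ℕ) : Type := PT n →₀ ℂ

namespace PTAlg

variable {n : ℕ}

noncomputable instance : AddCommGroup (PTAlg n) := inferInstanceAs (AddCommGroup (PT n →₀ ℂ))
noncomputable instance : Module ℂ (PTAlg n) := inferInstanceAs (Module ℂ (PT n →₀ ℂ))

/-- The coefficient of `t` in an element of `A_n`. -/
noncomputable def coeff (a : PTAlg n) : PT n → ℂ := fun t => (show PT n →₀ ℂ from a) t

/-- The basis element `e_t` of `A_n`. -/
noncomputable def e (t : PT n) : PTAlg n := show PT n →₀ ℂ from Finsupp.single t 1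

/-- Convolution: `e_s · e_t = e_{s ∘ t}` if `dom s = im t`, and `0` otherwise. -/
noncomputable instance : Mul (PTAlg n) :=
  ⟨fun a b =>
    show PT n →₀ ℂ from
      Finsupp.equivFunOnFinite.symm fun u =>
        ∑ p : PT n × PT n,
          if PT.dom p.1 = PT.ran p.2 ∧ PT.comp p.1 p.2 = u then coeff a p.1 * coeff b p.2
          else 0⟩

/-- The multiplicative unit of `A_n` is `∑_{X ⊆ {1,…,n}} e_{id_X}`. -/
noncomputable instance : One (PTAlg n) := ⟨∑ X : Finset (Fin n), e (PT.idOn X)⟩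

end PTAlg

namespace PTAlg

variable {n : ℕ}

open PT

lemma ext' {a b : PTAlg n} (h : ∀ u, coeff a u = coeff b u) : a = b := Finsupp.ext h

lemma coeff_mul (a b : PTAlg n) (u : PT n) :
    coeff (a * b) u =
      ∑ p : PT n × PT n,
        if dom p.1 = ran p.2 ∧ comp p.1 p.2 = u then coeff a p.1 * coeff b p.2 else 0 :=
  Finsupp.equivFunOnFinite_symm_apply_apply _ _

lemma coeff_add (a b : PTAlg n) (u : PT n) : coeff (a + b) u = coeff a u + coeff b u := rfl

lemma coeff_zero (u : PT n) : coeff (0 : PTAlg n) u = 0 := rfl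

lemma coeff_smul (r : ℂ) (a : PTAlg n) (u : PT n) : coeff (r • a) u = r * coeff a u := rfl

lemma coeff_e (t u : PT n) : coeff (e t) u = if t = u then 1 else 0 := Finsupp.single_apply

lemma coeff_one (u : PT n) :
    coeff (1 : PTAlg n) u = if u = idOn (dom u) then 1 else 0 := by
  show coeff (∑ X : Finset (Fin n), e (idOn X)) u = _
  have : ∀ (l : Finset (Finset (Fin n))), coeff (∑ X ∈ l, e (idOn X)) u
      = ∑ X ∈ l, coeff (e (idOn X)) u := by
    intro l
    induction l using Finset.induction_on with
    | empty => simp [coeff_zero]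
    | insert s₁ l₁ hx ih => rw [Finset.sum_insert hx, Finset.sum_insert hx, coeff_add, ih]
  rw [this]
  by_cases h : u = idOn (dom u)
  · rw [if_pos h]
    rw [Finset.sum_eq_single (dom u)]
    · rw [coeff_e, if_pos h.symm]
    · intro X _ hX
      rw [coeff_e, if_neg]
      intro hc
      apply hX
      rw [← dom_idOn X, hc]
    · intro habs; exact absurd (Finset.mem_univ _) habs
  · rw [if_neg h]
    apply Finset.sum_eq_zero
    intro X _
    rw [coeff_e, if_neg]
    intro hc
    apply h
    have : dom u = X := by rw [← hc, dom_idOn]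
    rw [this, hc]

end PTAlg

namespace PTAlg

variable {n : ℕ}
open PT

lemma left_distrib' (a b c : PTAlg n) : a * (b + c) = a * b + a * c := by
  apply ext'; intro u
  rw [coeff_add, coeff_mul, coeff_mul, coeff_mul, ← Finset.sum_add_distrib]
  apply Finset.sum_congr rfl
  intro p _
  split_ifs with h
  · rw [coeff_add]; ring
  · rw [add_zero]

lemma right_distrib' (a b c : PTAlg n) : (a + b) * c = a * c + b * c := by
  apply ext'; intro u
  rw [coeff_add, coeff_mul, coeff_mul, coeff_mul, ← Finset.sum_add_distrib]
  apply Finset.sum_congr rfl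
  intro p _
  split_ifs with h
  · rw [coeff_add]; ring
  · rw [add_zero]

lemma zero_mul' (a : PTAlg n) : 0 * a = 0 := by
  apply ext'; intro u
  rw [coeff_mul, coeff_zero]
  apply Finset.sum_eq_zero
  intro p _
  split_ifs with h
  · rw [coeff_zero, zero_mul]
  · rfl

lemma mul_zero' (a : PTAlg n) : a * 0 = 0 := by
  apply ext'; intro u
  rw [coeff_mul, coeff_zero]
  apply Finset.sum_eq_zero
  intro p _
  split_ifs with h
  · rw [coeff_zero, mul_zero]
  · rfl

lemma mul_one' (a : PTAlg n) : a * 1 = a := by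
  apply ext'
  intro u
  rw [coeff_mul]
  rw [Finset.sum_eq_single ((u, idOn (dom u)) : PT n × PT n)]
  · rw [if_pos ⟨by rw [ran_idOn], comp_idOn⟩, coeff_one, if_pos (by rw [dom_idOn]), mul_one]
  · rintro ⟨s, t⟩ _ hne
    dsimp only at hne ⊢
    split_ifs with hcond
    · obtain ⟨h1, h2⟩ := hcond
      rw [coeff_one]
      split_ifs with ht
      · exfalso
        apply hne
        rw [ht, ran_idOn] at h1
        rw [ht, ← h1, comp_idOn] at h2
        subst h2
        rw [Prod.mk.injEq]
        refine ⟨rfl, ?_⟩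
        rw [ht, h1]
      · rw [mul_zero]
    · rfl
  · intro habs; exact absurd (Finset.mem_univ _) habs

lemma one_mul' (a : PTAlg n) : 1 * a = a := by
  apply ext'
  intro u
  rw [coeff_mul]
  rw [Finset.sum_eq_single ((idOn (ran u), u) : PT n × PT n)]
  · rw [if_pos ⟨by rw [dom_idOn], idOn_comp⟩, coeff_one, if_pos (by rw [dom_idOn]), one_mul]
  · rintro ⟨s, t⟩ _ hne
    dsimp only at hne ⊢
    split_ifs with hcond
    · obtain ⟨h1, h2⟩ := hcond
      rw [coeff_one]
      split_ifs with hs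
      · exfalso
        apply hne
        rw [hs, h1, idOn_comp] at h2
        subst h2
        rw [Prod.mk.injEq]
        refine ⟨?_, rfl⟩
        rw [hs, h1]
      · rw [zero_mul]
    · rfl
  · intro habs; exact absurd (Finset.mem_univ _) habs

end PTAlg

namespace PTAlg

variable {n : ℕ}
open PT

lemma key_left (a b c : PTAlg n) (u w : PT n) :
    (∑ q1 : PT n, if dom q1 = ran w ∧ comp q1 w = u then coeff (a * b) q1 * coeff c w else 0)
      = ∑ s : PT n, ∑ t : PT n,
          if dom s = ran t ∧ dom t = ran w ∧ comp (comp s t) w = u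
          then coeff a s * coeff b t * coeff c w else 0 := by
  have step : ∀ q1 : PT n,
      (if dom q1 = ran w ∧ comp q1 w = u then coeff (a * b) q1 * coeff c w else 0)
        = ∑ s : PT n, ∑ t : PT n,
            if (dom s = ran t ∧ comp s t = q1) ∧ (dom q1 = ran w ∧ comp q1 w = u)
            then coeff a s * coeff b t * coeff c w else 0 := by
    intro q1
    by_cases h : dom q1 = ran w ∧ comp q1 w = u
    · rw [if_pos h, coeff_mul, Fintype.sum_prod_type, Finset.sum_mul]
      apply Finset.sum_congr rfl
      intro s _
      rw [Finset.sum_mul]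
      apply Finset.sum_congr rfl
      intro t _
      rw [ite_mul, zero_mul]
      by_cases h2 : dom s = ran t ∧ comp s t = q1
      · rw [if_pos h2, if_pos ⟨h2, h⟩]
      · rw [if_neg h2, if_neg (fun hc => h2 hc.1)]
    · rw [if_neg h]
      symm
      apply Finset.sum_eq_zero; intro s _
      apply Finset.sum_eq_zero; intro t _
      exact if_neg (fun hc => h hc.2)
  rw [Finset.sum_congr rfl (fun q1 _ => step q1), Finset.sum_comm]
  apply Finset.sum_congr rfl
  intro s _
  rw [Finset.sum_comm]
  apply Finset.sum_congr rfl
  intro t _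
  rw [Finset.sum_eq_single (comp s t)]
  · apply if_congr _ rfl rfl
    constructor
    · rintro ⟨⟨h1, -⟩, h2, h3⟩
      exact ⟨h1, by rw [← dom_comp h1]; exact h2, h3⟩
    · rintro ⟨h1, h2, h3⟩
      exact ⟨⟨h1, rfl⟩, by rw [dom_comp h1]; exact h2, h3⟩
  · intro q1 _ hne
    apply if_neg
    rintro ⟨⟨-, hq⟩, -⟩
    exact hne hq.symm
  · intro habs; exact absurd (Finset.mem_univ _) habs

lemma key_right (a b c : PTAlg n) (u s : PT n) :
    (∑ q2 : PT n, if dom s = ran q2 ∧ comp s q2 = u then coeff a s * coeff (b * c) q2 else 0)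
      = ∑ t : PT n, ∑ w : PT n,
          if dom s = ran t ∧ dom t = ran w ∧ comp (comp s t) w = u
          then coeff a s * coeff b t * coeff c w else 0 := by
  have step : ∀ q2 : PT n,
      (if dom s = ran q2 ∧ comp s q2 = u then coeff a s * coeff (b * c) q2 else 0)
        = ∑ t : PT n, ∑ w : PT n,
            if (dom t = ran w ∧ comp t w = q2) ∧ (dom s = ran q2 ∧ comp s q2 = u)
            then coeff a s * coeff b t * coeff c w else 0 := by
    intro q2
    by_cases h : dom s = ran q2 ∧ comp s q2 = u
    · rw [if_pos h, coeff_mul, Fintype.sum_prod_type, Finset.mul_sum]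
      apply Finset.sum_congr rfl
      intro t _
      rw [Finset.mul_sum]
      apply Finset.sum_congr rfl
      intro w _
      rw [mul_ite, mul_zero]
      by_cases h2 : dom t = ran w ∧ comp t w = q2
      · rw [if_pos h2, if_pos ⟨h2, h⟩, mul_assoc]
      · rw [if_neg h2, if_neg (fun hc => h2 hc.1)]
    · rw [if_neg h]
      symm
      apply Finset.sum_eq_zero; intro t _
      apply Finset.sum_eq_zero; intro w _
      exact if_neg (fun hc => h hc.2)
  rw [Finset.sum_congr rfl (fun q2 _ => step q2), Finset.sum_comm]
  apply Finset.sum_congr rfl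
  intro t _
  rw [Finset.sum_comm]
  apply Finset.sum_congr rfl
  intro w _
  rw [Finset.sum_eq_single (comp t w)]
  · apply if_congr _ rfl rfl
    constructor
    · rintro ⟨⟨h1, -⟩, h2, h3⟩
      refine ⟨by rw [← ran_comp h1]; exact h2, h1, ?_⟩
      rw [comp_assoc]; exact h3
    · rintro ⟨h1, h2, h3⟩
      exact ⟨⟨h2, rfl⟩, by rw [ran_comp h2]; exact h1, by rw [← comp_assoc]; exact h3⟩
  · intro q2 _ hne
    apply if_neg
    rintro ⟨⟨-, hq⟩, -⟩
    exact hne hq.symm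
  · intro habs; exact absurd (Finset.mem_univ _) habs

lemma coeff_mul_mul (a b c : PTAlg n) (u : PT n) :
    coeff (a * b * c) u =
      ∑ s : PT n, ∑ t : PT n, ∑ w : PT n,
        if dom s = ran t ∧ dom t = ran w ∧ comp (comp s t) w = u
        then coeff a s * coeff b t * coeff c w else 0 := by
  rw [coeff_mul, Fintype.sum_prod_type, Finset.sum_comm]
  calc (∑ w : PT n, ∑ q1 : PT n,
          if dom q1 = ran w ∧ comp q1 w = u then coeff (a * b) q1 * coeff c w else 0)
      = ∑ w : PT n, ∑ s : PT n, ∑ t : PT n,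
          if dom s = ran t ∧ dom t = ran w ∧ comp (comp s t) w = u
          then coeff a s * coeff b t * coeff c w else 0 :=
        Finset.sum_congr rfl fun w _ => key_left a b c u w
    _ = ∑ s : PT n, ∑ w : PT n, ∑ t : PT n,
          if dom s = ran t ∧ dom t = ran w ∧ comp (comp s t) w = u
          then coeff a s * coeff b t * coeff c w else 0 := Finset.sum_comm
    _ = ∑ s : PT n, ∑ t : PT n, ∑ w : PT n,
          if dom s = ran t ∧ dom t = ran w ∧ comp (comp s t) w = u
          then coeff a s * coeff b t * coeff c w else 0 :=
        Finset.sum_congr rfl fun s _ => Finset.sum_comm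

lemma coeff_mul_mul' (a b c : PTAlg n) (u : PT n) :
    coeff (a * (b * c)) u =
      ∑ s : PT n, ∑ t : PT n, ∑ w : PT n,
        if dom s = ran t ∧ dom t = ran w ∧ comp (comp s t) w = u
        then coeff a s * coeff b t * coeff c w else 0 := by
  rw [coeff_mul, Fintype.sum_prod_type]
  exact Finset.sum_congr rfl fun s _ => key_right a b c u s

lemma mul_assoc' (a b c : PTAlg n) : a * b * c = a * (b * c) :=
  ext' fun u => (coeff_mul_mul a b c u).trans (coeff_mul_mul' a b c u).symm

noncomputable instance : Ring (PTAlg n) :=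
  { (inferInstance : AddCommGroup (PTAlg n)) with
    mul := (· * ·)
    one := 1
    mul_assoc := mul_assoc'
    one_mul := one_mul'
    mul_one := mul_one'
    left_distrib := left_distrib'
    right_distrib := right_distrib'
    zero_mul := zero_mul'
    mul_zero := mul_zero' }

noncomputable instance : Algebra ℂ (PTAlg n) :=
  Algebra.ofModule
    (fun r x y => by
      apply ext'; intro u
      rw [coeff_smul, coeff_mul, coeff_mul, Finset.mul_sum]
      apply Finset.sum_congr rfl
      intro p _
      split_ifs with h
      · rw [coeff_smul]; ring
      · rw [mul_zero])
    (fun r x y => by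
      apply ext'; intro u
      rw [coeff_smul, coeff_mul, coeff_mul, Finset.mul_sum]
      apply Finset.sum_congr rfl
      intro p _
      split_ifs with h
      · rw [coeff_smul]; ring
      · rw [mul_zero])

end PTAlg

section PTAux

namespace PT

open Finset

variable {n : ℕ}

/-- Injectivity of a partial function. -/
def Inj (t : PT n) : Prop := ∀ ⦃x y a⦄, t x = some a → t y = some a → x = y

/-- The total function underlying `t` on its domain. -/
noncomputable def fn (t : PT n) : Fin n → Fin n := fun x => (t x).getD x

lemma fn_eq {t : PT n} {x a} (h : t x = some a) : fn t x = a := by simp [fn, h]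

lemma image_fn (t : PT n) : (dom t).image (fn t) = ran t := by
  ext y
  constructor
  · intro hy
    rcases Finset.mem_image.mp hy with ⟨x, hx, rfl⟩
    rw [mem_dom] at hx
    rcases Option.isSome_iff_exists.mp hx with ⟨a, ha⟩
    rw [fn_eq ha]
    exact mem_ran.mpr ⟨x, ha⟩
  · intro hy
    rcases mem_ran.mp hy with ⟨x, hx⟩
    exact Finset.mem_image.mpr ⟨x, mem_dom.mpr (by simp [hx]), fn_eq hx⟩

lemma card_ran_le (t : PT n) : (ran t).card ≤ (dom t).card := by
  rw [← image_fn]; exact Finset.card_image_le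

lemma inj_of_card {t : PT n} (h : (dom t).card ≤ (ran t).card) : Inj t := by
  have hinj : Set.InjOn (fn t) (dom t) := by
    apply Finset.injOn_of_card_image_eq
    rw [image_fn]
    exact le_antisymm (by rw [← image_fn]; exact Finset.card_image_le) h
  intro x y a hx hy
  exact hinj (mem_dom.mpr (by simp [hx])) (mem_dom.mpr (by simp [hy]))
    (by rw [fn_eq hx, fn_eq hy])

/-- Partial inverse of a partial function (meaningful for injective ones). -/
noncomputable def pinv (t : PT n) : PT n := fun x =>
  if h : ∃ y, t y = some x then some h.choose else none

lemma pinv_eq_some {t : PT n} (ht : Inj t) {x y} (h : t y = some x) :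
    pinv t x = some y := by
  have hex : ∃ y, t y = some x := ⟨y, h⟩
  unfold pinv
  rw [dif_pos hex]
  exact congrArg some (ht hex.choose_spec h)

lemma dom_pinv (t : PT n) : dom (pinv t) = ran t := by
  ext x
  rw [mem_dom, mem_ran]
  unfold pinv
  by_cases h : ∃ y, t y = some x
  · rw [dif_pos h]; simpa using h
  · rw [dif_neg h]; simpa using h

lemma comp_pinv (t : PT n) : comp t (pinv t) = idOn (ran t) := by
  funext x
  show (pinv t x).bind t = idOn (ran t) x
  unfold pinv idOn
  by_cases h : ∃ y, t y = some x
  · rw [dif_pos h, if_pos (mem_ran.mpr h)]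
    exact h.choose_spec
  · rw [dif_neg h, if_neg (fun hc => h (mem_ran.mp hc))]
    rfl

lemma pinv_comp' {t : PT n} (ht : Inj t) : comp (pinv t) t = idOn (dom t) := by
  funext x
  show (t x).bind (pinv t) = idOn (dom t) x
  unfold idOn
  cases hx : t x with
  | none =>
    rw [if_neg (fun hc => by rw [mem_dom, hx] at hc; simp at hc)]
    rfl
  | some a =>
    rw [if_pos (mem_dom.mpr (by simp [hx]))]
    exact pinv_eq_some ht hx

lemma ran_pinv {t : PT n} (ht : Inj t) : ran (pinv t) = dom t := by
  ext y
  rw [mem_ran, mem_dom]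
  constructor
  · rintro ⟨x, hx⟩
    unfold pinv at hx
    by_cases h : ∃ y', t y' = some x
    · rw [dif_pos h] at hx
      have := h.choose_spec
      rw [Option.some_injective _ hx] at this
      simp [this]
    · rw [dif_neg h] at hx; cases hx
  · intro hy
    rcases Option.isSome_iff_exists.mp hy with ⟨a, ha⟩
    exact ⟨a, pinv_eq_some ht ha⟩

end PT

end PTAux
section PTFact

namespace PT

variable {n : ℕ}

lemma exists_factorization {t : PT n} (h : (ran t).card < (dom t).card) :
    ∃ s r : PT n, dom s = ran r ∧ t = comp s r ∧
      (ran r).card + 1 = (dom r).card ∧ ran s = ran t ∧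
      (dom s).card + 1 = (dom t).card := by
  classical
  -- find a collision
  have hnotinj : ¬ Set.InjOn (fn t) (dom t) := by
    intro hinj
    rw [← Finset.card_image_of_injOn hinj, image_fn] at h
    exact lt_irrefl _ h
  rw [Set.InjOn] at hnotinj
  push_neg at hnotinj
  obtain ⟨x, hx, x', hx', hfxx, hne⟩ := hnotinj
  rw [Finset.mem_coe, mem_dom] at hx hx'
  rcases Option.isSome_iff_exists.mp hx with ⟨a, ha⟩
  rcases Option.isSome_iff_exists.mp hx' with ⟨a', ha'⟩
  have haa : a = a' := by rw [← fn_eq ha, ← fn_eq ha', hfxx]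
  subst haa
  have hxd : x ∈ dom t := mem_dom.mpr (by simp [ha])
  have hx'd : x' ∈ dom t := mem_dom.mpr (by simp [ha'])
  refine ⟨(fun z => if z = x' then none else t z),
          (fun z => if z = x' then some x else if (t z).isSome then some z else none),
          ?_, ?_, ?_, ?_, ?_⟩
  case _ =>
    -- dom s = ran r = dom t \ {x'}
    ext z
    rw [mem_dom, mem_ran]
    constructor
    · intro hz
      by_cases hzx' : z = x'
      · rw [if_pos hzx'] at hz; simp at hz
      · rw [if_neg hzx'] at hz
        exact ⟨z, by rw [if_neg hzx', if_pos hz]⟩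
    · rintro ⟨w, hw⟩
      by_cases hwx' : w = x'
      · rw [if_pos hwx'] at hw
        have hzx : z = x := (Option.some_injective _ hw).symm
        subst hzx
        rw [if_neg hne]
        simpa using hx
      · rw [if_neg hwx'] at hw
        by_cases hts : (t w).isSome
        · rw [if_pos hts] at hw
          have : w = z := Option.some_injective _ hw
          subst this
          rw [if_neg hwx']
          exact hts
        · rw [if_neg hts] at hw; cases hw
  case _ =>
    funext z
    change t z = (if z = x' then some x else if (t z).isSome = true then some z else none).bind
      (fun w => if w = x' then none else t w)
    by_cases hzx' : z = x'
    · rw [if_pos hzx']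
      change t z = if x = x' then none else t x
      rw [if_neg hne, ha, hzx', ha']
    · rw [if_neg hzx']
      by_cases hts : (t z).isSome
      · rw [if_pos hts]
        change t z = if z = x' then none else t z
        rw [if_neg hzx']
      · rw [if_neg hts]
        rw [Option.not_isSome_iff_eq_none] at hts
        rw [hts]; rfl
  case _ =>
    -- card ran r + 1 = card dom r; dom r = dom t, ran r = (dom t).erase x'
    have hdr : dom (fun z => if z = x' then some x else if (t z).isSome then some z else none)
        = dom t := by
      ext z
      rw [mem_dom, mem_dom]
      by_cases hzx' : z = x'
      · subst hzx'; rw [if_pos rfl]; simpa using hx'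
      · rw [if_neg hzx']
        by_cases hts : (t z).isSome
        · rw [if_pos hts]; simpa using hts
        · rw [if_neg hts]; simpa using hts
    have hrr : ran (fun z => if z = x' then some x else if (t z).isSome then some z else none)
        = (dom t).erase x' := by
      ext z
      rw [mem_ran, Finset.mem_erase]
      constructor
      · rintro ⟨w, hw⟩
        by_cases hwx' : w = x'
        · rw [if_pos hwx'] at hw
          have : z = x := (Option.some_injective _ hw).symm
          subst this
          exact ⟨hne, hxd⟩
        · rw [if_neg hwx'] at hw
          by_cases hts : (t w).isSome
          · rw [if_pos hts] at hw
            have : w = z := Option.some_injective _ hw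
            subst this
            exact ⟨hwx', mem_dom.mpr hts⟩
          · rw [if_neg hts] at hw; cases hw
      · rintro ⟨hzx', hzd⟩
        exact ⟨z, by rw [if_neg hzx', if_pos (mem_dom.mp hzd)]⟩
    rw [hdr, hrr, Finset.card_erase_of_mem hx'd]
    have : 1 ≤ (dom t).card := Finset.card_pos.mpr ⟨x', hx'd⟩
    omega
  case _ =>
    ext z
    rw [mem_ran, mem_ran]
    constructor
    · rintro ⟨w, hw⟩
      by_cases hwx' : w = x'
      · rw [if_pos hwx'] at hw; cases hw
      · rw [if_neg hwx'] at hw; exact ⟨w, hw⟩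
    · rintro ⟨w, hw⟩
      by_cases hwx' : w = x'
      · subst hwx'
        rw [hw] at ha'
        refine ⟨x, ?_⟩
        rw [if_neg hne, ha, ha']
      · exact ⟨w, by rw [if_neg hwx']; exact hw⟩
  case _ =>
    have hds : dom (fun z => if z = x' then none else t z) = (dom t).erase x' := by
      ext z
      rw [mem_dom, Finset.mem_erase, mem_dom]
      by_cases hzx' : z = x'
      · rw [if_pos hzx']; simp [hzx']
      · rw [if_neg hzx']; simp [hzx']
    rw [hds, Finset.card_erase_of_mem hx'd]
    have : 1 ≤ (dom t).card := Finset.card_pos.mpr ⟨x', hx'd⟩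
    omega

end PT

end PTFact
namespace PTAlg

variable {n : ℕ}
open PT

lemma coeff_sum {ι : Type*} (s : Finset ι) (f : ι → PTAlg n) (u : PT n) :
    coeff (∑ i ∈ s, f i) u = ∑ i ∈ s, coeff (f i) u := by
  classical
  induction s using Finset.induction_on with
  | empty => simp [coeff_zero]
  | insert a s' hx ih =>
    rw [Finset.sum_insert hx, Finset.sum_insert hx, coeff_add, ih]

lemma eq_sum_coeff (a : PTAlg n) : ∑ t : PT n, coeff a t • e t = a := by
  apply ext'
  intro u
  rw [coeff_sum]
  rw [Finset.sum_eq_single u]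
  · rw [coeff_smul, coeff_e, if_pos rfl, mul_one]
  · intro t _ hne
    rw [coeff_smul, coeff_e, if_neg hne, mul_zero]
  · intro h; exact absurd (Finset.mem_univ _) h

lemma ne_zero_iff_coeff {a : PTAlg n} : a ≠ 0 ↔ ∃ t, coeff a t ≠ 0 := by
  constructor
  · intro h
    by_contra hc
    push_neg at hc
    exact h (ext' fun u => by rw [hc u, coeff_zero])
  · rintro ⟨t, ht⟩ rfl
    exact ht (coeff_zero t)

lemma mem_span_iff {P : PT n → Prop} {x : PTAlg n} :
    x ∈ Submodule.span ℂ {y : PTAlg n | ∃ t : PT n, P t ∧ y = e t} ↔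
      ∀ t, coeff x t ≠ 0 → P t := by
  constructor
  · intro hx
    induction hx using Submodule.span_induction with
    | mem y hy =>
      obtain ⟨t₀, hPt₀, rfl⟩ := hy
      intro t ht
      rw [coeff_e] at ht
      by_cases h : t₀ = t
      · exact h ▸ hPt₀
      · rw [if_neg h] at ht; exact absurd rfl ht
    | zero => intro t ht; exact absurd (coeff_zero t) ht
    | add y z hy hz ihy ihz =>
      intro t ht
      rw [coeff_add] at ht
      by_cases h : coeff y t = 0
      · exact ihz t (by intro h0; rw [h, h0, add_zero] at ht; exact ht rfl)
      · exact ihy t h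
    | smul r y hy ihy =>
      intro t ht
      rw [coeff_smul] at ht
      exact ihy t (right_ne_zero_of_mul ht)
  · intro h
    rw [← eq_sum_coeff x]
    apply Submodule.sum_mem
    intro t _
    by_cases ht : coeff x t = 0
    · rw [ht, zero_smul]; exact Submodule.zero_mem _
    · exact Submodule.smul_mem _ _ (Submodule.subset_span ⟨t, h t ht, rfl⟩)

lemma e_mul_e {s t : PT n} (h : dom s = ran t) : e s * e t = e (comp s t) := by
  apply ext'
  intro u
  rw [coeff_mul]
  rw [Finset.sum_eq_single ((s, t) : PT n × PT n)]
  · by_cases hc : comp s t = u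
    · rw [if_pos ⟨h, hc⟩, coeff_e, coeff_e, if_pos rfl, if_pos rfl, coeff_e, if_pos hc, one_mul]
    · rw [if_neg (fun hh => hc hh.2), coeff_e, if_neg hc]
  · rintro ⟨p1, p2⟩ _ hne
    split_ifs with hc
    · by_cases h1 : s = p1
      · by_cases h2 : t = p2
        · exact absurd (by rw [h1, h2]) hne
        · rw [coeff_e t p2, if_neg h2, mul_zero]
      · rw [coeff_e s p1, if_neg h1, zero_mul]
    · rfl
  · intro hh; exact absurd (Finset.mem_univ _) hh

lemma coeff_e_mul (s : PT n) (b : PTAlg n) (u : PT n) :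
    coeff (e s * b) u =
      ∑ p2 : PT n, if dom s = ran p2 ∧ comp s p2 = u then coeff b p2 else 0 := by
  rw [coeff_mul, Fintype.sum_prod_type, Finset.sum_comm]
  apply Finset.sum_congr rfl
  intro p2 _
  rw [Finset.sum_eq_single s]
  · rw [coeff_e, if_pos rfl]
    split_ifs <;> simp
  · intro p1 _ hne
    split_ifs with hc
    · rw [coeff_e, if_neg (fun hh => hne hh.symm), zero_mul]
    · rfl
  · intro hh; exact absurd (Finset.mem_univ _) hh

lemma coeff_mul_e (b : PTAlg n) (s : PT n) (u : PT n) :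
    coeff (b * e s) u =
      ∑ p1 : PT n, if dom p1 = ran s ∧ comp p1 s = u then coeff b p1 else 0 := by
  rw [coeff_mul, Fintype.sum_prod_type]
  apply Finset.sum_congr rfl
  intro p1 _
  rw [Finset.sum_eq_single s]
  · rw [coeff_e, if_pos rfl]
    split_ifs <;> simp
  · intro p2 _ hne
    split_ifs with hc
    · rw [coeff_e, if_neg (fun hh => hne hh.symm), mul_zero]
    · rfl
  · intro hh; exact absurd (Finset.mem_univ _) hh

lemma coeff_mul_ne_zero {x y : PTAlg n} {u : PT n} (h : coeff (x * y) u ≠ 0) :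
    ∃ s t : PT n, dom s = ran t ∧ comp s t = u ∧ coeff x s ≠ 0 ∧ coeff y t ≠ 0 := by
  rw [coeff_mul] at h
  obtain ⟨p, _, hp⟩ := Finset.exists_ne_zero_of_sum_ne_zero h
  by_cases hc : dom p.1 = ran p.2 ∧ comp p.1 p.2 = u
  · rw [if_pos hc] at hp
    exact ⟨p.1, p.2, hc.1, hc.2, left_ne_zero_of_mul hp, right_ne_zero_of_mul hp⟩
  · rw [if_neg hc] at hp; exact absurd rfl hp

lemma coeff_idOn_mul (X : Finset (Fin n)) (b : PTAlg n) (u : PT n) :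
    coeff (e (idOn X) * b) u = if ran u = X then coeff b u else 0 := by
  rw [coeff_e_mul]
  rw [Finset.sum_eq_single u]
  · rw [dom_idOn]
    by_cases h : ran u = X
    · rw [if_pos h, if_pos ⟨h.symm, by rw [← h]; exact idOn_comp⟩]
    · rw [if_neg h, if_neg (fun hh => h hh.1.symm)]
  · intro p2 _ hne
    apply if_neg
    rintro ⟨h1, h2⟩
    rw [dom_idOn] at h1
    rw [h1] at h2
    rw [idOn_comp] at h2
    exact hne h2
  · intro hh; exact absurd (Finset.mem_univ _) hh

lemma coeff_mul_idOn (b : PTAlg n) (W : Finset (Fin n)) (u : PT n) :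
    coeff (b * e (idOn W)) u = if dom u = W then coeff b u else 0 := by
  rw [coeff_mul_e]
  rw [Finset.sum_eq_single u]
  · rw [ran_idOn]
    by_cases h : dom u = W
    · rw [if_pos h, if_pos ⟨h, by rw [← h]; exact comp_idOn⟩]
    · rw [if_neg h, if_neg (fun hh => h hh.1)]
  · intro p1 _ hne
    apply if_neg
    rintro ⟨h1, h2⟩
    rw [ran_idOn] at h1
    rw [← h1] at h2
    rw [comp_idOn] at h2
    exact hne h2
  · intro hh; exact absurd (Finset.mem_univ _) hh

end PTAlg
namespace PTAlg

variable {n : ℕ}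
open PT

/-- The span of basis elements of defect at least `k`. -/
noncomputable def Sk (n k : ℕ) : Submodule ℂ (PTAlg n) :=
  Submodule.span ℂ {x : PTAlg n | ∃ t : PT n, (ran t).card + k ≤ (dom t).card ∧ x = e t}

lemma mem_Sk {k : ℕ} {x : PTAlg n} :
    x ∈ Sk n k ↔ ∀ t, coeff x t ≠ 0 → (ran t).card + k ≤ (dom t).card :=
  mem_span_iff

lemma mem_Sk_zero (x : PTAlg n) : x ∈ Sk n 0 := by
  rw [mem_Sk]
  intro t _
  rw [add_zero]
  exact card_ran_le t

lemma mul_mem_Sk {a b : ℕ} {x y : PTAlg n} (hx : x ∈ Sk n a) (hy : y ∈ Sk n b) :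
    x * y ∈ Sk n (a + b) := by
  rw [mem_Sk] at hx hy ⊢
  intro u hu
  obtain ⟨s, t, hd, hc, hxs, hyt⟩ := coeff_mul_ne_zero hu
  have h1 := hx s hxs
  have h2 := hy t hyt
  rw [← hc, ran_comp hd, dom_comp hd]
  rw [hd] at h1
  omega

lemma eq_zero_of_mem_Sk {x : PTAlg n} (hx : x ∈ Sk n (n + 1)) : x = 0 := by
  rw [mem_Sk] at hx
  apply ext'
  intro u
  rw [coeff_zero]
  by_contra h
  have h1 := hx u h
  have h2 : (dom u).card ≤ n := by
    have := Finset.card_le_card (Finset.subset_univ (dom u))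
    rwa [Finset.card_univ, Fintype.card_fin] at this
  omega

lemma pow_mem_Sk {x : PTAlg n} (hx : x ∈ Sk n 1) : ∀ m : ℕ, x ^ (m + 1) ∈ Sk n (m + 1) := by
  intro m
  induction m with
  | zero => rw [pow_one]; exact hx
  | succ m ih =>
    have := mul_mem_Sk ih hx
    rw [pow_succ]
    exact this

lemma isNilpotent_of_mem_Sk1 {x : PTAlg n} (hx : x ∈ Sk n 1) : IsNilpotent x :=
  ⟨n + 1, eq_zero_of_mem_Sk (pow_mem_Sk hx n)⟩

lemma Sk1_le_jacobson : Sk n 1 ≤ Submodule.restrictScalars ℂ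
    (Ideal.jacobson (⊥ : Ideal (PTAlg n))) := by
  intro x hx
  rw [Submodule.restrictScalars_mem, Ideal.mem_jacobson_iff]
  intro y
  have hw : y * x ∈ Sk n 1 := by
    have := mul_mem_Sk (mem_Sk_zero y) hx
    rwa [zero_add] at this
  obtain ⟨v, hv⟩ := (isNilpotent_of_mem_Sk1 hw).isUnit_one_add
  refine ⟨(↑v⁻¹ : PTAlg n), ?_⟩
  rw [Submodule.mem_bot]
  have h1 : (↑v⁻¹ : PTAlg n) * (1 + y * x) = 1 := by rw [← hv]; exact v.inv_mul
  rw [mul_add, mul_one] at h1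
  rw [mul_assoc]
  rw [add_comm] at h1
  rw [sub_eq_zero, ← h1, add_comm]

end PTAlg
namespace PTAlg

variable {n : ℕ}

noncomputable instance : Module.Finite ℂ (PTAlg n) :=
  inferInstanceAs (Module.Finite ℂ (PT n →₀ ℂ))

noncomputable instance : Module.Free ℂ (PTAlg n) :=
  inferInstanceAs (Module.Free ℂ (PT n →₀ ℂ))

end PTAlg

open Polynomial in
/-- In a finite-dimensional `ℂ`-algebra, every element of the Jacobson radical is nilpotent. -/
theorem isNilpotent_of_mem_jacobson_bot' {A : Type*} [Ring A] [Algebra ℂ A]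
    [Module.Finite ℂ A] {d : A} (hd : d ∈ Ideal.jacobson (⊥ : Ideal A)) :
    IsNilpotent d := by
  have hint : IsIntegral ℂ d := IsIntegral.of_finite ℂ d
  have hmonic : (minpoly ℂ d).Monic := minpoly.monic hint
  have hroots : ∀ μ ∈ (minpoly ℂ d).roots, μ = 0 := by
    intro μ hμ
    by_contra hμ0
    have hisroot : (minpoly ℂ d).IsRoot μ := (Polynomial.mem_roots'.mp hμ).2
    obtain ⟨q, hq⟩ := Polynomial.dvd_iff_isRoot.mpr hisroot
    have hqmonic : q.Monic := (Polynomial.monic_X_sub_C μ).of_mul_monic_left (hq ▸ hmonic)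
    have hdeglt : q.degree < (minpoly ℂ d).degree := by
      have h1 : (minpoly ℂ d).degree = q.degree + 1 := by
        rw [hq, Polynomial.degree_mul, Polynomial.degree_X_sub_C, add_comm]
      rw [h1, Polynomial.degree_eq_natDegree hqmonic.ne_zero]
      exact_mod_cast Nat.lt_succ_self _
    have hq_ne : Polynomial.aeval d q ≠ 0 := fun h0 =>
      absurd (minpoly.min ℂ d hqmonic h0) (not_le.mpr hdeglt)
    obtain ⟨z, hz⟩ := Ideal.mem_jacobson_iff.mp hd (algebraMap ℂ A (-μ⁻¹))
    rw [Submodule.mem_bot] at hz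
    set α := algebraMap ℂ A (-μ⁻¹) with hα
    set β := algebraMap ℂ A μ with hβ
    set Q := Polynomial.aeval d q with hQ
    have hαβ : α * β = -1 := by
      rw [hα, hβ, ← map_mul, neg_mul, inv_mul_cancel₀ hμ0, map_neg, map_one]
    have h2 : (d - β) * Q = 0 := by
      have h3 := minpoly.aeval ℂ d
      rw [hq, map_mul, map_sub, Polynomial.aeval_X, Polynomial.aeval_C] at h3
      exact h3
    have key : (α * d + 1) * Q = 0 := by
      have : (α * d + 1) * Q = α * ((d - β) * Q) := by
        rw [sub_mul, mul_sub, ← mul_assoc, ← mul_assoc, hαβ, add_mul, one_mul, neg_one_mul,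
          sub_neg_eq_add]
      rw [this, h2, mul_zero]
    have hz1 : z * (α * d + 1) = 1 := by
      rw [mul_add, mul_one, ← mul_assoc]
      exact sub_eq_zero.mp hz
    have : Q = 0 := by
      calc Q = z * (α * d + 1) * Q := by rw [hz1, one_mul]
      _ = z * ((α * d + 1) * Q) := by rw [mul_assoc]
      _ = 0 := by rw [key, mul_zero]
    exact hq_ne this
  have hsplit : (minpoly ℂ d).Splits := IsAlgClosed.splits _
  have hp : minpoly ℂ d = X ^ (minpoly ℂ d).natDegree := by
    have hprod := hsplit.eq_prod_roots_of_monic hmonic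
    have hcard : (minpoly ℂ d).roots.card = (minpoly ℂ d).natDegree :=
      (Polynomial.splits_iff_card_roots.mp hsplit)
    have hmap : (minpoly ℂ d).roots.map (fun a => X - C a) =
        Multiset.replicate (minpoly ℂ d).roots.card X := by
      rw [Multiset.eq_replicate]
      refine ⟨Multiset.card_map _ _, ?_⟩
      intro b hb
      obtain ⟨a, ha, rfl⟩ := Multiset.mem_map.mp hb
      rw [hroots a ha, map_zero, sub_zero]
    conv_lhs => rw [hprod]
    rw [hmap, Multiset.prod_replicate, hcard]
  refine ⟨(minpoly ℂ d).natDegree, ?_⟩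
  have h5 := minpoly.aeval ℂ d
  rw [hp, map_pow, Polynomial.aeval_X] at h5
  exact h5
namespace PTAlg

variable {n : ℕ}
open PT

lemma trace_mulLeft (x : PTAlg n) :
    LinearMap.trace ℂ (PTAlg n) (LinearMap.mulLeft ℂ x) = ∑ t : PT n, coeff (x * e t) t := by
  classical
  let b : Module.Basis (PT n) ℂ (PTAlg n) := Finsupp.basisSingleOne
  rw [LinearMap.trace_eq_matrix_trace ℂ b, Matrix.trace]
  apply Finset.sum_congr rfl
  intro t _
  show ((LinearMap.toMatrix b b) (LinearMap.mulLeft ℂ x)).diag t = coeff (x * e t) t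
  rw [Matrix.diag_apply, LinearMap.toMatrix_apply, LinearMap.mulLeft_apply]
  rfl

lemma coeff_mul_e_self (x : PTAlg n) (t : PT n) :
    coeff (x * e t) t = coeff x (idOn (ran t)) := by
  rw [coeff_mul_e]
  rw [Finset.sum_eq_single (idOn (ran t))]
  · rw [if_pos ⟨dom_idOn _, idOn_comp⟩]
  · intro p1 _ hne
    apply if_neg
    rintro ⟨h1, h2⟩
    apply hne
    funext y
    show p1 y = idOn (ran t) y
    unfold idOn
    by_cases hy : y ∈ ran t
    · rw [if_pos hy]
      rcases mem_ran.mp hy with ⟨z, hz⟩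
      have := congrFun h2 z
      show p1 y = some y
      rw [show comp p1 t z = (t z).bind p1 from rfl, hz] at this
      exact this
    · rw [if_neg hy]
      have : y ∉ dom p1 := by rw [h1]; exact hy
      rw [mem_dom] at this
      exact Option.not_isSome_iff_eq_none.mp this
  · intro hh; exact absurd (Finset.mem_univ _) hh

lemma trace_mulLeft_eq (x : PTAlg n) :
    LinearMap.trace ℂ (PTAlg n) (LinearMap.mulLeft ℂ x) =
      ∑ t : PT n, coeff x (idOn (ran t)) := by
  rw [trace_mulLeft]
  exact Finset.sum_congr rfl fun t _ => coeff_mul_e_self x t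

lemma jacobson_le_Sk1 :
    Submodule.restrictScalars ℂ (Ideal.jacobson (⊥ : Ideal (PTAlg n))) ≤ Sk n 1 := by
  classical
  intro a ha
  rw [Submodule.restrictScalars_mem] at ha
  rw [mem_Sk]
  intro t₀ ht₀
  by_contra hdef
  push_neg at hdef
  have hWX : (dom t₀).card = (ran t₀).card := le_antisymm (by omega) (card_ran_le t₀)
  set W := dom t₀ with hW
  set X := ran t₀ with hXd
  set c := e (idOn X) * (a * e (idOn W)) with hc
  have hcoeffc : ∀ u, coeff c u = if ran u = X ∧ dom u = W then coeff a u else 0 := by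
    intro u
    rw [hc, coeff_idOn_mul, coeff_mul_idOn]
    by_cases h1 : ran u = X
    · by_cases h2 : dom u = W <;> simp [h1, h2]
    · simp [h1]
  have hct₀ : coeff c t₀ ≠ 0 := by
    rw [hcoeffc, if_pos ⟨rfl, rfl⟩]
    exact ht₀
  have hcsupp : ∀ u, coeff c u ≠ 0 → dom u = W ∧ ran u = X := by
    intro u hu
    rw [hcoeffc] at hu
    by_cases h : ran u = X ∧ dom u = W
    · exact ⟨h.2, h.1⟩
    · rw [if_neg h] at hu; exact absurd rfl hu
  have hcinj : ∀ u, coeff c u ≠ 0 → Inj u := by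
    intro u hu
    obtain ⟨h1, h2⟩ := hcsupp u hu
    apply inj_of_card
    rw [h1, h2]
    exact hWX.le
  have hcJ : c ∈ Ideal.jacobson (⊥ : Ideal (PTAlg n)) := by
    apply Ideal.mul_mem_left
    exact Ideal.mul_mem_right _ _ ha
  set g := (∑ q : PT n, (starRingEnd ℂ) (coeff c q) • e (pinv q)) * c with hg
  have hgJ : g ∈ Ideal.jacobson (⊥ : Ideal (PTAlg n)) := Ideal.mul_mem_left _ _ hcJ
  have hgcoeff : ∀ u, coeff g u = ∑ q : PT n, (starRingEnd ℂ) (coeff c q) *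
      (∑ p : PT n, if dom (pinv q) = ran p ∧ comp (pinv q) p = u then coeff c p else 0) := by
    intro u
    rw [hg, Finset.sum_mul, coeff_sum]
    apply Finset.sum_congr rfl
    intro q _
    rw [smul_mul_assoc, coeff_smul, coeff_e_mul (pinv q) c u]
  have hgsupp : ∀ u, coeff g u ≠ 0 → dom u = W ∧ ran u = W := by
    intro u hu
    rw [hgcoeff] at hu
    obtain ⟨q, _, hq⟩ := Finset.exists_ne_zero_of_sum_ne_zero hu
    have hcq : coeff c q ≠ 0 := fun h => hq (by rw [h, map_zero, zero_mul])
    have hinner := right_ne_zero_of_mul hq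
    obtain ⟨p, _, hp⟩ := Finset.exists_ne_zero_of_sum_ne_zero hinner
    have hstep : dom (pinv q) = ran p ∧ comp (pinv q) p = u ∧ coeff c p ≠ 0 := by
      by_cases hcnd : dom (pinv q) = ran p ∧ comp (pinv q) p = u
      · exact ⟨hcnd.1, hcnd.2, by rwa [if_pos hcnd] at hp⟩
      · rw [if_neg hcnd] at hp; exact absurd rfl hp
    obtain ⟨h1, h2, hcp⟩ := hstep
    obtain ⟨hpd, _⟩ := hcsupp p hcp
    obtain ⟨hqd, _⟩ := hcsupp q hcq
    constructor
    · rw [← h2, dom_comp h1, hpd]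
    · rw [← h2, ran_comp h1, ran_pinv (hcinj q hcq), hqd]
  have hpos : coeff g (idOn W) = ((∑ q : PT n, Complex.normSq (coeff c q) : ℝ) : ℂ) := by
    rw [hgcoeff]
    rw [Complex.ofReal_sum]
    apply Finset.sum_congr rfl
    intro q _
    by_cases hcq : coeff c q = 0
    · simp [hcq]
    · have hinner : (∑ p : PT n,
          if dom (pinv q) = ran p ∧ comp (pinv q) p = idOn W then coeff c p else 0)
          = coeff c q := by
        rw [Finset.sum_eq_single q]
        · rw [if_pos ⟨dom_pinv q, by rw [pinv_comp' (hcinj q hcq), (hcsupp q hcq).1]⟩]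
        · intro p _ hne
          split_ifs with hcnd
          · by_contra hcp0
            have hcp : coeff c p ≠ 0 := hcp0
            apply hne
            obtain ⟨h1, h2⟩ := hcnd
            have e1 : comp q (comp (pinv q) p) = comp q (idOn W) := by rw [h2]
            rw [← comp_assoc, comp_pinv, (hcsupp q hcq).2, ← (hcsupp p hcp).2, idOn_comp] at e1
            rw [← (hcsupp q hcq).1, comp_idOn] at e1
            exact e1
          · rfl
        · intro hh; exact absurd (Finset.mem_univ _) hh
      rw [hinner, mul_comm, Complex.mul_conj]
  have hneq : coeff g (idOn W) ≠ 0 := by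
    rw [hpos, Complex.ofReal_ne_zero]
    have hpos' : 0 < ∑ q : PT n, Complex.normSq (coeff c q) :=
      Finset.sum_pos' (fun q _ => Complex.normSq_nonneg _)
        ⟨t₀, Finset.mem_univ _, Complex.normSq_pos.mpr hct₀⟩
    exact ne_of_gt hpos'
  have hnil : IsNilpotent g := isNilpotent_of_mem_jacobson_bot' hgJ
  have hnilL : IsNilpotent (LinearMap.mulLeft ℂ g) :=
    (LinearMap.isNilpotent_mulLeft_iff ℂ g).mpr hnil
  have htr0 : LinearMap.trace ℂ (PTAlg n) (LinearMap.mulLeft ℂ g) = 0 :=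
    (LinearMap.isNilpotent_trace_of_isNilpotent hnilL).eq_zero
  rw [trace_mulLeft_eq] at htr0
  have hterm : ∀ t : PT n, coeff g (idOn (ran t)) =
      if ran t = W then coeff g (idOn W) else 0 := by
    intro t
    by_cases h : ran t = W
    · rw [h, if_pos rfl]
    · rw [if_neg h]
      by_contra h0
      have := (hgsupp _ h0).1
      rw [dom_idOn] at this
      exact h this
  rw [Finset.sum_congr rfl (fun t _ => hterm t)] at htr0
  rw [← Finset.sum_filter, Finset.sum_const] at htr0
  have hmem : idOn W ∈ Finset.univ.filter (fun t : PT n => ran t = W) :=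
    Finset.mem_filter.mpr ⟨Finset.mem_univ _, ran_idOn W⟩
  have hcard : (Finset.univ.filter (fun t : PT n => ran t = W)).card ≠ 0 :=
    Finset.card_ne_zero_of_mem hmem
  rw [nsmul_eq_mul] at htr0
  have hcast : ((Finset.univ.filter (fun t : PT n => ran t = W)).card : ℂ) ≠ 0 :=
    Nat.cast_ne_zero.mpr hcard
  exact hneq ((mul_eq_zero.mp htr0).resolve_left hcast)

end PTAlg
namespace PTAlg

variable {n : ℕ}
open PT

lemma e_mem_pow_Sk1 : ∀ k : ℕ, 1 ≤ k → ∀ t : PT n, (ran t).card + k ≤ (dom t).card →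
    e t ∈ (Sk n 1) ^ k := by
  intro k hk
  induction k, hk using Nat.le_induction with
  | base =>
    intro t ht
    rw [pow_one]
    exact Submodule.subset_span ⟨t, ht, rfl⟩
  | succ k hk ih =>
    intro t ht
    have hlt : (ran t).card < (dom t).card := by omega
    obtain ⟨s, r, hdr, hts, hr1, hrs, hs1⟩ := exists_factorization hlt
    have hes : e s ∈ (Sk n 1) ^ k := ih s (by rw [hrs]; omega)
    have her : e r ∈ Sk n 1 := Submodule.subset_span ⟨r, by omega, rfl⟩
    rw [hts, ← e_mul_e hdr, pow_succ]
    exact Submodule.mul_mem_mul hes her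

lemma pow_Sk1 (k : ℕ) (hk : 1 ≤ k) : (Sk n 1) ^ k = Sk n k := by
  induction k, hk using Nat.le_induction with
  | base => rw [pow_one]
  | succ k hk ih =>
    apply le_antisymm
    · rw [pow_succ]
      apply Submodule.mul_le.mpr
      intro x hx y hy
      rw [ih] at hx
      exact mul_mem_Sk hx hy
    · apply Submodule.span_le.mpr
      rintro x ⟨t, ht, rfl⟩
      exact e_mem_pow_Sk1 (k + 1) (by omega) t ht

end PTAlg

open PT PTAlg in
/-- For every `k ≥ 1`, the `k`-th power of the Jacobson radical of the
convolution algebra `A_n` is the linear span of `{e_t : |dom t| − |im t| ≥ k}`. -/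
theorem radical_power_of_convolution_algebra (n k : ℕ) (hk : 1 ≤ k) :
    (Submodule.restrictScalars ℂ (Ideal.jacobson (⊥ : Ideal (PTAlg n)))) ^ k =
      Submodule.span ℂ {x : PTAlg n | ∃ t : PT n, (ran t).card + k ≤ (dom t).card ∧ x = e t} := by
  have h1 : Submodule.restrictScalars ℂ (Ideal.jacobson (⊥ : Ideal (PTAlg n))) = Sk n 1 :=
    le_antisymm jacobson_le_Sk1 Sk1_le_jacobson
  rw [h1]
  exact pow_Sk1 k hk
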